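/- Let θ be a regular cardinal and α < θ an ordinal, and let a_i (i < α) be sets of regular cardinals (with ⋃_i a_i having size < its minimum). Then pcf_{θ-complete}(⋃_{i<α} a_i) = ⋃_{i<α} pcf_{θ-complete}(a_i). -/
import Mathlib


open Cardinal Set

/-- `J` is a (proper) ideal on the elements of `a`. -/
def IsIdealOn (a : Set Cardinal.{0}) (J : Set (Set ↥a)) : Prop :=
  ∅ ∈ J ∧ (∀ s t : Set ↥a, s ⊆ t → t ∈ J → s ∈ J) ∧
    (∀ s t : Set ↥a, s ∈ J → t ∈ J → s ∪ t ∈ J) ∧ Set.univ ∉ J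

/-- `J` is `θ`-complete: closed under unions of fewer than `θ` members. -/
def IsThetaComplete (θ : Cardinal.{0}) (a : Set Cardinal.{0})
    (J : Set (Set ↥a)) : Prop :=
  ∀ A : Set (Set ↥a), A ⊆ J → #A < Cardinal.lift.{1,0} θ → ⋃₀ A ∈ J

/-- `f <_J g` modulo the ideal `J`. -/
def ltJ (a : Set Cardinal.{0}) (J : Set (Set ↥a))
    (f g : ↥a → Ordinal.{0}) : Prop :=
  {x | g x ≤ f x} ∈ J

/-- `lam` is the true cofinality of `∏ a / J`. -/
def IsTcfIdeal (a : Set Cardinal.{0}) (J : Set (Set ↥a))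
    (lam : Cardinal.{0}) : Prop :=
  lam.IsRegular ∧
  ∃ F : Ordinal.{0} → (↥a → Ordinal.{0}),
    (∀ α < lam.ord, ∀ x : ↥a, F α x < (x : Cardinal.{0}).ord) ∧
    (∀ α β, α < β → β < lam.ord → ltJ a J (F α) (F β)) ∧
    (∀ g : ↥a → Ordinal.{0}, (∀ x : ↥a, g x < (x : Cardinal.{0}).ord) →
      ∃ α < lam.ord, ltJ a J g (F α))

/-- `pcf_{θ-complete} a` : true cofinalities of `∏ a / J` over
`θ`-complete proper ideals `J` on `a`. -/
def pcfCompl (θ : Cardinal.{0}) (a : Set Cardinal.{0}) : Set Cardinal.{0} :=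
  {lam | ∃ J : Set (Set ↥a),
    IsIdealOn a J ∧ IsThetaComplete θ a J ∧ IsTcfIdeal a J lam}

section Helpers

attribute [local instance] Classical.propDecidable

variable {θ : Cardinal.{0}} {a b : Set Cardinal.{0}}

/-- push a subset of `b` to a subset of `a`. -/
def embSet (b a : Set Cardinal.{0}) (s : Set ↥b) : Set ↥a :=
  {x | ∃ h : ↑x ∈ b, (⟨↑x, h⟩ : ↥b) ∈ s}

lemma embSet_sUnion (A : Set (Set ↥b)) :
    embSet b a (⋃₀ A) = ⋃₀ (embSet b a '' A) := by
  ext x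
  simp only [embSet, mem_setOf_eq, mem_sUnion, mem_image]
  constructor
  · rintro ⟨h, t, ht, hx⟩
    exact ⟨_, ⟨t, ht, rfl⟩, h, hx⟩
  · rintro ⟨_, ⟨t, ht, rfl⟩, h, hx⟩
    exact ⟨h, t, ht, hx⟩

lemma ord_pos_of_mem (hreg : ∀ x ∈ a, Cardinal.IsRegular x) (x : ↥a) :
    (0 : Ordinal.{0}) < (x : Cardinal.{0}).ord := by
  rw [Cardinal.lt_ord, Ordinal.card_zero]
  exact (hreg x x.2).pos

/-- restriction direction: a θ-complete tcf ideal on `a` concentrating on `b`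
restricts to one on `b`. -/
lemma mem_pcfCompl_of_concentrates (hba : b ⊆ a)
    (hreg : ∀ x ∈ a, Cardinal.IsRegular x)
    {lam : Cardinal.{0}} {J : Set (Set ↥a)}
    (hJ : IsIdealOn a J) (hJc : IsThetaComplete θ a J)
    (hT : IsTcfIdeal a J lam)
    (hb : {x : ↥a | ↑x ∈ b} ∉ J) :
    lam ∈ pcfCompl θ b := by
  obtain ⟨hempty, hmono, hun, hproper⟩ := hJ
  obtain ⟨hlam, F, hF1, hF2, hF3⟩ := hT
  refine ⟨{s | embSet b a s ∈ J}, ⟨?_, ?_, ?_, ?_⟩, ?_, hlam,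
    fun β y => F β ⟨↑y, hba y.2⟩, ?_, ?_, ?_⟩
  · -- ∅
    have : embSet b a (∅ : Set ↥b) = ∅ := by
      ext x; simp [embSet]
    simpa [this] using hempty
  · -- mono
    intro s t hst ht
    refine hmono _ _ ?_ ht
    rintro x ⟨h, hx⟩; exact ⟨h, hst hx⟩
  · -- union
    intro s t hs ht
    have : embSet b a (s ∪ t) = embSet b a s ∪ embSet b a t := by
      ext x
      simp only [embSet, mem_setOf_eq, mem_union]
      constructor
      · rintro ⟨h, hx | hx⟩
        · exact Or.inl ⟨h, hx⟩
        · exact Or.inr ⟨h, hx⟩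
      · rintro (⟨h, hx⟩ | ⟨h, hx⟩)
        · exact ⟨h, Or.inl hx⟩
        · exact ⟨h, Or.inr hx⟩
    simpa [Set.mem_setOf_eq, this] using hun _ _ hs ht
  · -- proper
    have : embSet b a (Set.univ : Set ↥b) = {x : ↥a | ↑x ∈ b} := by
      ext x; simp [embSet]
    simpa [Set.mem_setOf_eq, this] using hb
  · -- θ-complete
    intro A hA hAcard
    show embSet b a (⋃₀ A) ∈ J
    rw [embSet_sUnion]
    exact hJc _ (by rintro _ ⟨t, ht, rfl⟩; exact hA ht)
      (lt_of_le_of_lt Cardinal.mk_image_le hAcard)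
  · -- bounds
    intro β hβ y
    exact hF1 β hβ ⟨↑y, hba y.2⟩
  · -- increasing
    intro β γ hβγ hγ
    have h2 := hF2 β γ hβγ hγ
    refine hmono _ _ ?_ h2
    rintro x ⟨h, hx⟩
    have : (⟨↑x, hba h⟩ : ↥a) = x := Subtype.ext rfl
    simpa [mem_setOf_eq, this] using hx
  · -- cofinal
    intro g hg
    set gt : ↥a → Ordinal.{0} := fun x =>
      if h : ↑x ∈ b then g ⟨↑x, h⟩ else 0 with hgt
    have hgtlt : ∀ x : ↥a, gt x < (x : Cardinal.{0}).ord := by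
      intro x
      by_cases h : ↑x ∈ b
      · simpa [hgt, h] using hg ⟨↑x, h⟩
      · simpa [hgt, h] using ord_pos_of_mem hreg x
    obtain ⟨β, hβ, hltJ⟩ := hF3 gt hgtlt
    refine ⟨β, hβ, ?_⟩
    refine hmono _ _ ?_ hltJ
    rintro x ⟨h, hx⟩
    have he : (⟨↑x, hba h⟩ : ↥a) = x := Subtype.ext rfl
    simp only [mem_setOf_eq, he] at hx
    show F β x ≤ gt ⟨↑x, hba h⟩
    have : gt ⟨↑x, hba h⟩ = g ⟨↑x, h⟩ := by
      simp only [hgt]; rw [dif_pos h]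
    rw [this]
    exact hx

/-- extension direction: `pcfCompl θ b ⊆ pcfCompl θ a` when `b ⊆ a`. -/
lemma mem_pcfCompl_of_superset (hba : b ⊆ a)
    (hreg : ∀ x ∈ a, Cardinal.IsRegular x)
    {lam : Cardinal.{0}} (h : lam ∈ pcfCompl θ b) : lam ∈ pcfCompl θ a := by
  obtain ⟨J', ⟨hempty, hmono, hun, hproper⟩, hJc, hlam, F, hF1, hF2, hF3⟩ := h
  set r : Set ↥a → Set ↥b := fun s => {y | (⟨↑y, hba y.2⟩ : ↥a) ∈ s} with hr
  refine ⟨{s | r s ∈ J'}, ⟨?_, ?_, ?_, ?_⟩, ?_, hlam,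
    fun β x => if h : ↑x ∈ b then F β ⟨↑x, h⟩ else 0, ?_, ?_, ?_⟩
  · have : r ∅ = ∅ := by ext y; simp [hr]
    simpa [this] using hempty
  · intro s t hst ht
    exact hmono _ _ (fun y hy => hst hy) ht
  · intro s t hs ht
    have : r (s ∪ t) = r s ∪ r t := by ext y; simp [hr]
    simpa [Set.mem_setOf_eq, this] using hun _ _ hs ht
  · have : r Set.univ = Set.univ := by ext y; simp [hr]
    simpa [Set.mem_setOf_eq, this] using hproper
  · intro A hA hAcard
    have : r (⋃₀ A) = ⋃₀ (r '' A) := by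
      ext y
      simp only [hr, mem_setOf_eq, mem_sUnion, mem_image]
      constructor
      · rintro ⟨t, ht, hy⟩; exact ⟨_, ⟨t, ht, rfl⟩, hy⟩
      · rintro ⟨_, ⟨t, ht, rfl⟩, hy⟩; exact ⟨t, ht, hy⟩
    show r (⋃₀ A) ∈ J'
    rw [this]
    exact hJc _ (by rintro _ ⟨t, ht, rfl⟩; exact hA ht)
      (lt_of_le_of_lt Cardinal.mk_image_le hAcard)
  · intro β hβ x
    by_cases h : ↑x ∈ b
    · simpa [h] using hF1 β hβ ⟨↑x, h⟩
    · simpa [h] using ord_pos_of_mem hreg x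
  · intro β γ hβγ hγ
    have h2 := hF2 β γ hβγ hγ
    show r _ ∈ J'
    refine hmono _ _ ?_ h2
    intro y hy
    simp only [hr, mem_setOf_eq] at hy
    simp only [mem_setOf_eq]
    have e1 : (if h : ((⟨↑y, hba y.2⟩ : ↥a) : Cardinal.{0}) ∈ b then F γ ⟨↑y, h⟩ else 0)
        = F γ y := by rw [dif_pos y.2]
    have e2 : (if h : ((⟨↑y, hba y.2⟩ : ↥a) : Cardinal.{0}) ∈ b then F β ⟨↑y, h⟩ else 0)
        = F β y := by rw [dif_pos y.2]
    rw [e1, e2] at hy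
    exact hy
  · intro g hg
    obtain ⟨β, hβ, hltJ⟩ := hF3 (fun y => g ⟨↑y, hba y.2⟩)
      (fun y => hg ⟨↑y, hba y.2⟩)
    refine ⟨β, hβ, ?_⟩
    show r _ ∈ J'
    refine hmono _ _ ?_ hltJ
    intro y hy
    simp only [hr, mem_setOf_eq] at hy
    simp only [mem_setOf_eq]
    have e1 : (if h : ((⟨↑y, hba y.2⟩ : ↥a) : Cardinal.{0}) ∈ b then F β ⟨↑y, h⟩ else 0)
        = F β y := by rw [dif_pos y.2]
    rw [e1] at hy
    exact hy

end Helpers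

/-- for `α < θ` (θ regular), `θ`-complete pcf commutes with
unions of `α` many sets: `pcf_{θ-complete}(⋃_{i<α} a_i) =
⋃_{i<α} pcf_{θ-complete}(a_i)`. -/
theorem pcfCompl_iUnion (θ : Cardinal.{0}) (hθ : θ.IsRegular)
    (α : Ordinal.{0}) (hα : α < θ.ord)
    (as : Ordinal.{0} → Set Cardinal.{0})
    (hreg : ∀ i < α, ∀ x ∈ as i, x.IsRegular)
    (hsz : #(⋃ i ∈ Set.Iio α, as i) <
      Cardinal.lift.{1,0} (sInf (⋃ i ∈ Set.Iio α, as i))) :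
    pcfCompl θ (⋃ i ∈ Set.Iio α, as i) =
      ⋃ i ∈ Set.Iio α, pcfCompl θ (as i) := by
  set a := ⋃ i ∈ Set.Iio α, as i with ha
  have hreg' : ∀ x ∈ a, Cardinal.IsRegular x := by
    intro x hx
    simp only [ha, mem_iUnion, mem_Iio, exists_prop] at hx
    obtain ⟨i, hi, hx⟩ := hx
    exact hreg i hi x hx
  have hsub : ∀ i < α, as i ⊆ a := by
    intro i hi x hx
    simp only [ha, mem_iUnion, mem_Iio, exists_prop]
    exact ⟨i, hi, hx⟩
  ext lam
  simp only [mem_iUnion, mem_Iio, exists_prop]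
  constructor
  · rintro ⟨J, hJ, hJc, hT⟩
    -- find i < α with {x | ↑x ∈ as i} ∉ J
    by_contra hcon
    push_neg at hcon
    have hall : ∀ i < α, {x : ↥a | ↑x ∈ as i} ∈ J := by
      by_contra hno
      push_neg at hno
      obtain ⟨i, hi, hni⟩ := hno
      exact (hcon i hi) (mem_pcfCompl_of_concentrates (hsub i hi) hreg' hJ hJc hT hni)
    -- then univ ∈ J, contradiction
    set A : Set (Set ↥a) := (fun i : Ordinal.{0} => {x : ↥a | ↑x ∈ as i}) '' (Set.Iio α) with hA
    have hAJ : A ⊆ J := by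
      rintro _ ⟨i, hi, rfl⟩
      exact hall i hi
    have hAcard : #A < Cardinal.lift.{1,0} θ := by
      refine lt_of_le_of_lt Cardinal.mk_image_le ?_
      rw [Ordinal.mk_Iio_ordinal]
      exact Cardinal.lift_lt.2 (Cardinal.lt_ord.1 hα)
    have huniv : ⋃₀ A = Set.univ := by
      ext x
      simp only [mem_sUnion, mem_univ, iff_true, hA, mem_image, mem_Iio]
      have hx := x.2
      simp only [ha, mem_iUnion, mem_Iio, exists_prop] at hx
      obtain ⟨i, hi, hxi⟩ := hx
      exact ⟨_, ⟨i, hi, rfl⟩, hxi⟩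
    have := hJc A hAJ hAcard
    rw [huniv] at this
    exact hJ.2.2.2 this
  · rintro ⟨i, hi, hmem⟩
    exact mem_pcfCompl_of_superset (hsub i hi) hreg' hmem
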